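/- Let b ≥ 0 and t ∈ ℝ, and write Λ_t^b(k,ξ) = (1 + k² + (ξ + k·t)²)^{b/2}. Let F, G : ℤ × ℝ → ℂ be measurable functions with ‖F‖_{L¹} := ∑_l ∫ |F(l,η)| dη, ‖G‖_{L¹}, ‖Λ_t^b F‖_{L²} := (∑_l ∫ Λ_t^b(l,η)²|F(l,η)|² dη)^{1/2} and ‖Λ_t^b G‖_{L²} all finite, and define the convolution H(k,ξ) = ∑_{l ∈ ℤ} ∫_ℝ F(l,η)·G(k−l, ξ−η) dη. Then ( ∑_k ∫ Λ_t^b(k,ξ)² |H(k,ξ)|² dξ )^{1/2} ≤ 2^b · ( ‖F‖_{L¹} · ‖Λ_t^b G‖_{L²} + ‖G‖_{L¹} · ‖Λ_t^b F‖_{L²} ). -/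

import Mathlib

open MeasureTheory

open ENNReal

instance : SigmaFinite (Measure.count : Measure ℤ) := by
  apply Measure.sigmaFinite_of_countable (Set.countable_range fun n : ℤ => ({n} : Set ℤ))
  · rintro s ⟨n, rfl⟩; simp [Measure.count_singleton]
  · ext x; simp

noncomputable def muZR : Measure (ℤ × ℝ) := (Measure.count : Measure ℤ).prod volume

instance : (Measure.count : Measure ℤ).IsAddRightInvariant := by
  constructor
  intro g
  ext s hs
  rw [Measure.map_apply (measurable_add_const g) hs]
  rw [Measure.count_apply hs, Measure.count_apply (by trivial : MeasurableSet ((· + g) ⁻¹' s))]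
  rw [Set.encard_preimage_of_injective_subset_range (add_left_injective g)
    (fun x _ => ⟨x - g, by simp⟩)]

instance : muZR.IsAddRightInvariant := by unfold muZR; infer_instance
instance : SigmaFinite muZR := by unfold muZR; infer_instance

lemma sumInt_eq (φ : ℤ × ℝ → ℝ≥0∞) (hφ : Measurable φ) :
    ∫⁻ p, φ p ∂muZR = ∑' k : ℤ, ∫⁻ ξ : ℝ, φ (k, ξ) := by
  rw [muZR, lintegral_prod _ hφ.aemeasurable, lintegral_count]

lemma lint_translate (φ : ℤ × ℝ → ℝ≥0∞) (hφ : Measurable φ) (y : ℤ × ℝ) :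
    ∫⁻ x, φ (x - y) ∂muZR = ∫⁻ x, φ x ∂muZR := by
  conv_rhs => rw [← map_add_right_eq_self muZR (-y)]
  rw [lintegral_map hφ (measurable_add_const (-y))]
  simp [sub_eq_add_neg]

lemma conv_measurable {f g : ℤ × ℝ → ℝ≥0∞} (hf : Measurable f) (hg : Measurable g) :
    Measurable fun x => ∫⁻ y, f y * g (x - y) ∂muZR := by
  apply Measurable.lintegral_prod_right
  exact (hf.comp measurable_snd).mul (hg.comp measurable_sub)

lemma rpow_half_sq (a : ℝ≥0∞) : (a ^ ((1:ℝ)/2)) ^ (2:ℝ) = a := by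
  rw [← ENNReal.rpow_mul]; norm_num

lemma rpow_half_sq_nat (a : ℝ≥0∞) : (a ^ ((1:ℝ)/2)) ^ (2:ℕ) = a := by
  rw [← ENNReal.rpow_natCast (a ^ ((1:ℝ)/2)) 2, ← ENNReal.rpow_mul]; norm_num

lemma sq_rpow_half (a : ℝ≥0∞) : (a ^ (2:ℕ)) ^ ((1:ℝ)/2) = a := by
  rw [← ENNReal.rpow_natCast a 2, ← ENNReal.rpow_mul]; norm_num

lemma young {f g : ℤ × ℝ → ℝ≥0∞} (hf : Measurable f) (hg : Measurable g) :
    (∫⁻ x, (∫⁻ y, f y * g (x - y) ∂muZR) ^ (2:ℕ) ∂muZR) ^ ((1:ℝ)/2)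
      ≤ (∫⁻ y, f y ∂muZR) * (∫⁻ x, g x ^ (2:ℕ) ∂muZR) ^ ((1:ℝ)/2) := by
  have hpq : (2:ℝ).HolderConjugate 2 := Real.HolderConjugate.two_two
  set I := ∫⁻ y, f y ∂muZR with hI
  set C := ∫⁻ x, g x ^ (2:ℕ) ∂muZR with hC
  have hfr : Measurable fun y => f y ^ ((1:ℝ)/2) := hf.pow measurable_const
  have key : ∀ x, (∫⁻ y, f y * g (x - y) ∂muZR) ^ (2:ℕ)
      ≤ I * ∫⁻ y, f y * g (x - y) ^ (2:ℕ) ∂muZR := by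
    intro x
    have hgx : Measurable fun y => g (x - y) := hg.comp (measurable_const.sub measurable_id)
    have h1 : ∫⁻ y, f y * g (x - y) ∂muZR
        = ∫⁻ y, (f y ^ ((1:ℝ)/2)) * (f y ^ ((1:ℝ)/2) * g (x - y)) ∂muZR := by
      congr 1; ext y
      rw [← mul_assoc, ← ENNReal.rpow_add_of_nonneg _ _ (by norm_num) (by norm_num)]
      norm_num
    have h2 := ENNReal.lintegral_mul_le_Lp_mul_Lq muZR hpq
      hfr.aemeasurable (hfr.mul hgx).aemeasurable
    simp only [Pi.mul_apply] at h2
    rw [← h1] at h2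
    have e1 : ∫⁻ y, (f y ^ ((1:ℝ)/2)) ^ (2:ℝ) ∂muZR = I := by
      rw [hI]; congr 1; ext y; exact rpow_half_sq _
    have e2 : ∫⁻ y, (f y ^ ((1:ℝ)/2) * g (x - y)) ^ (2:ℝ) ∂muZR
        = ∫⁻ y, f y * g (x - y) ^ (2:ℕ) ∂muZR := by
      congr 1; ext y
      rw [ENNReal.mul_rpow_of_nonneg _ _ (by norm_num), rpow_half_sq,
        ← ENNReal.rpow_natCast (g (x - y)) 2]
      norm_num
    rw [e1, e2] at h2
    calc (∫⁻ y, f y * g (x - y) ∂muZR) ^ (2:ℕ)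
        ≤ (I ^ ((1:ℝ)/2) * (∫⁻ y, f y * g (x - y) ^ (2:ℕ) ∂muZR) ^ ((1:ℝ)/2)) ^ (2:ℕ) :=
          pow_le_pow_left' h2 2
      _ = I * ∫⁻ y, f y * g (x - y) ^ (2:ℕ) ∂muZR := by
          rw [mul_pow, rpow_half_sq_nat, rpow_half_sq_nat]
  have step2 : ∫⁻ x, (∫⁻ y, f y * g (x - y) ∂muZR) ^ (2:ℕ) ∂muZR ≤ I * (I * C) := by
    calc ∫⁻ x, (∫⁻ y, f y * g (x - y) ∂muZR) ^ (2:ℕ) ∂muZR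
        ≤ ∫⁻ x, I * ∫⁻ y, f y * g (x - y) ^ (2:ℕ) ∂muZR ∂muZR := lintegral_mono key
      _ = I * ∫⁻ x, ∫⁻ y, f y * g (x - y) ^ (2:ℕ) ∂muZR ∂muZR :=
          lintegral_const_mul I (conv_measurable hf (hg.pow_const 2))
      _ = I * ∫⁻ y, ∫⁻ x, f y * g (x - y) ^ (2:ℕ) ∂muZR ∂muZR := by
          congr 1
          exact lintegral_lintegral_swap
            (((hf.comp measurable_snd).mul
              ((hg.pow_const 2).comp (measurable_fst.sub measurable_snd))).aemeasurable)
      _ = I * (I * C) := by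
          congr 1
          have : ∀ y : ℤ × ℝ, ∫⁻ x, f y * g (x - y) ^ (2:ℕ) ∂muZR = f y * C := by
            intro y
            have hm : Measurable fun x => g (x - y) ^ (2:ℕ) :=
              (hg.comp (measurable_sub_const y)).pow_const 2
            rw [lintegral_const_mul (f y) hm, hC]
            congr 1
            exact lint_translate (fun x => g x ^ (2:ℕ)) (hg.pow_const 2) y
          simp_rw [this]
          rw [lintegral_mul_const C hf, hI, mul_comm]
  calc (∫⁻ x, (∫⁻ y, f y * g (x - y) ∂muZR) ^ (2:ℕ) ∂muZR) ^ ((1:ℝ)/2)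
      ≤ (I * (I * C)) ^ ((1:ℝ)/2) := ENNReal.rpow_le_rpow step2 (by norm_num)
    _ = I * C ^ ((1:ℝ)/2) := by
        rw [← mul_assoc, ← pow_two, ENNReal.mul_rpow_of_nonneg _ _ (by norm_num), sq_rpow_half]

instance : (Measure.count : Measure ℤ).IsAddLeftInvariant := by
  constructor
  intro g
  ext s hs
  rw [Measure.map_apply (measurable_const_add g) hs]
  rw [Measure.count_apply hs, Measure.count_apply (by trivial : MeasurableSet ((g + ·) ⁻¹' s))]
  rw [Set.encard_preimage_of_injective_subset_range (add_right_injective g)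
    (fun x _ => ⟨x - g, by simp⟩)]

instance : (Measure.count : Measure ℤ).IsNegInvariant := by
  constructor
  show Measure.map Neg.neg Measure.count = Measure.count
  ext s hs
  rw [Measure.map_apply measurable_neg hs]
  rw [Measure.count_apply hs, Measure.count_apply (by trivial : MeasurableSet (Neg.neg ⁻¹' s))]
  rw [Set.encard_preimage_of_injective_subset_range neg_injective
    (fun x _ => ⟨-x, neg_neg x⟩)]

example : (volume : Measure ℝ).IsNegInvariant := inferInstance
example : muZR.IsAddLeftInvariant := by unfold muZR; infer_instance

instance : muZR.IsNegInvariant := by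
  constructor
  show Measure.map Neg.neg muZR = muZR
  have h : (Neg.neg : ℤ × ℝ → ℤ × ℝ) = Prod.map (Neg.neg : ℤ → ℤ) (Neg.neg : ℝ → ℝ) := rfl
  rw [muZR, h, ← Measure.map_prod_map _ _ measurable_neg measurable_neg,
    Measure.map_neg_eq_self, Measure.map_neg_eq_self]

instance : muZR.IsAddLeftInvariant := by unfold muZR; infer_instance

lemma lint_reflect (φ : ℤ × ℝ → ℝ≥0∞) (hφ : Measurable φ) (x : ℤ × ℝ) :
    ∫⁻ y, φ (x - y) ∂muZR = ∫⁻ y, φ y ∂muZR :=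
  (Measure.measurePreserving_sub_left muZR x).lintegral_comp hφ

lemma conv_comm {a bfun : ℤ × ℝ → ℝ≥0∞} (ha : Measurable a) (hb : Measurable bfun) (x : ℤ × ℝ) :
    ∫⁻ y, a y * bfun (x - y) ∂muZR = ∫⁻ y, bfun y * a (x - y) ∂muZR := by
  have h := lint_reflect (fun z => a (x - z) * bfun z)
    ((ha.comp (measurable_const.sub measurable_id)).mul hb) x
  have h2 : ∫⁻ y, bfun y * a (x - y) ∂muZR = ∫⁻ y, a (x - y) * bfun y ∂muZR := by
    congr 1; ext y; rw [mul_comm]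
  rw [h2, ← h]
  congr 1; ext y; rw [sub_sub_cancel x y]

lemma enorm_tsum_le (a : ℤ → ℂ) : (‖∑' l, a l‖₊ : ℝ≥0∞) ≤ ∑' l, (‖a l‖₊ : ℝ≥0∞) := by
  by_cases h : Summable a
  · by_cases ht : (∑' l, (‖a l‖₊ : ℝ≥0∞)) = ⊤
    · simp [ht]
    · have hs : Summable fun l => ‖a l‖₊ := ENNReal.tsum_coe_ne_top_iff_summable.1 ht
      rw [← ENNReal.coe_tsum hs]
      exact_mod_cast nnnorm_tsum_le hs
  · rw [tsum_eq_zero_of_not_summable h]; simp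

lemma wsub {b : ℝ} (hb : 0 ≤ b) (t : ℝ) (k l : ℤ) (ξ η : ℝ) :
    (1 + (k:ℝ)^2 + (ξ + (k:ℝ)*t)^2) ^ (b/2)
      ≤ 2^b * ((1 + (l:ℝ)^2 + (η + (l:ℝ)*t)^2) ^ (b/2)
        + (1 + ((k - l : ℤ):ℝ)^2 + ((ξ - η) + ((k - l : ℤ):ℝ)*t)^2) ^ (b/2)) := by
  set X : ℝ := 1 + (k:ℝ)^2 + (ξ + (k:ℝ)*t)^2 with hX
  set Y : ℝ := 1 + (l:ℝ)^2 + (η + (l:ℝ)*t)^2 with hY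
  set Z : ℝ := 1 + ((k - l : ℤ):ℝ)^2 + ((ξ - η) + ((k - l : ℤ):ℝ)*t)^2 with hZ
  have hY0 : (0:ℝ) ≤ Y := by positivity
  have hZ0 : (0:ℝ) ≤ Z := by positivity
  have hX0 : (0:ℝ) ≤ X := by positivity
  have hXle : X ≤ 4 * max Y Z := by
    have h1 : X ≤ 2 * (Y + Z) := by
      rw [hX, hY, hZ]
      push_cast
      nlinarith [sq_nonneg ((l:ℝ) - ((k:ℝ) - (l:ℝ))),
        sq_nonneg ((η + (l:ℝ)*t) - ((ξ - η) + ((k:ℝ) - (l:ℝ))*t))]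
    calc X ≤ 2 * (Y + Z) := h1
      _ ≤ 4 * max Y Z := by
          rcases max_cases Y Z with ⟨hm, hle⟩ | ⟨hm, hle⟩ <;> rw [hm] <;> nlinarith
  have h2 : X ^ (b/2) ≤ (4 * max Y Z) ^ (b/2) :=
    Real.rpow_le_rpow hX0 hXle (by positivity)
  have h3 : (4 * max Y Z) ^ (b/2) = 2^b * (max Y Z) ^ (b/2) := by
    rw [Real.mul_rpow (by norm_num) (le_max_of_le_left hY0)]
    congr 1
    rw [show (4:ℝ) = (2:ℝ)^(2:ℕ) by norm_num, ← Real.rpow_natCast (2:ℝ) 2,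
      ← Real.rpow_mul (by norm_num)]
    norm_num
    ring_nf
  have h4 : (max Y Z) ^ (b/2) ≤ Y ^ (b/2) + Z ^ (b/2) := by
    rcases max_choice Y Z with hm | hm <;> rw [hm]
    · nlinarith [Real.rpow_nonneg hZ0 (b/2)]
    · nlinarith [Real.rpow_nonneg hY0 (b/2)]
  calc X ^ (b/2) ≤ 2^b * (max Y Z) ^ (b/2) := by rw [← h3]; exact h2
    _ ≤ 2^b * (Y ^ (b/2) + Z ^ (b/2)) := by
        apply mul_le_mul_of_nonneg_left h4 (by positivity)

lemma ofReal_weight_sq (b t : ℝ) (k : ℤ) (ξ : ℝ) (z : ℂ) :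
    ENNReal.ofReal ((1 + (k:ℝ)^2 + (ξ + (k:ℝ)*t)^2)^b * ‖z‖^2)
      = (ENNReal.ofReal ((1 + (k:ℝ)^2 + (ξ + (k:ℝ)*t)^2)^(b/2)) * (‖z‖₊ : ℝ≥0∞)) ^ (2:ℕ) := by
  have hXnn : (0:ℝ) ≤ 1 + (k:ℝ)^2 + (ξ + (k:ℝ)*t)^2 := by positivity
  have e : (1 + (k:ℝ)^2 + (ξ + (k:ℝ)*t)^2)^b * ‖z‖^2
      = ((1 + (k:ℝ)^2 + (ξ + (k:ℝ)*t)^2)^(b/2) * ‖z‖)^2 := by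
    rw [mul_pow, ← Real.rpow_natCast ((1 + (k:ℝ)^2 + (ξ + (k:ℝ)*t)^2)^(b/2)) 2,
      ← Real.rpow_mul hXnn]
    norm_num
  rw [e, ENNReal.ofReal_pow (by positivity), ENNReal.ofReal_mul (by positivity),
    ofReal_norm_eq_enorm, enorm_eq_nnnorm]

example (b t : ℝ) : Measurable (fun p : ℤ × ℝ =>
    ENNReal.ofReal ((1 + (p.1:ℝ)^2 + (p.2 + (p.1:ℝ)*t)^2) ^ (b/2))) := by
  fun_prop


/-- Fourier-variable form of the product estimate
`‖Λ_t^b(fg)‖_{L²} ≤ ‖f‖_{L^∞}‖Λ_t^b g‖_{L²} + ‖g‖_{L^∞}‖Λ_t^b f‖_{L²}` (Lemma 3.1):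
for `b ≥ 0`, `t ∈ ℝ` and `H = F ∗ G` on `ℤ × ℝ`,
`‖Λ_t^b H‖_{L²} ≤ 2^b (‖F‖_{L¹}‖Λ_t^b G‖_{L²} + ‖G‖_{L¹}‖Λ_t^b F‖_{L²})`. -/
theorem stmt14 (b : ℝ) (hb : 0 ≤ b) (t : ℝ) (F G : ℤ × ℝ → ℂ)
    (hFm : Measurable F) (hGm : Measurable G)
    (hF1 : (∑' l : ℤ, ∫⁻ η : ℝ, ENNReal.ofReal ‖F (l, η)‖) < ⊤)
    (hG1 : (∑' l : ℤ, ∫⁻ η : ℝ, ENNReal.ofReal ‖G (l, η)‖) < ⊤)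
    (hF2 : (∑' l : ℤ, ∫⁻ η : ℝ,
        ENNReal.ofReal ((1 + (l : ℝ) ^ 2 + (η + (l : ℝ) * t) ^ 2) ^ b * ‖F (l, η)‖ ^ 2)) < ⊤)
    (hG2 : (∑' l : ℤ, ∫⁻ η : ℝ,
        ENNReal.ofReal ((1 + (l : ℝ) ^ 2 + (η + (l : ℝ) * t) ^ 2) ^ b * ‖G (l, η)‖ ^ 2)) < ⊤)
    (Hc : ℤ × ℝ → ℂ)
    (hH : ∀ (k : ℤ) (ξ : ℝ), Hc (k, ξ) = ∑' l : ℤ, ∫ η : ℝ, F (l, η) * G (k - l, ξ - η)) :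
    (∑' k : ℤ, ∫⁻ ξ : ℝ,
        ENNReal.ofReal ((1 + (k : ℝ) ^ 2 + (ξ + (k : ℝ) * t) ^ 2) ^ b * ‖Hc (k, ξ)‖ ^ 2))
          ^ ((1 : ℝ) / 2)
      ≤ ENNReal.ofReal ((2 : ℝ) ^ b) *
          ((∑' l : ℤ, ∫⁻ η : ℝ, ENNReal.ofReal ‖F (l, η)‖) *
              (∑' l : ℤ, ∫⁻ η : ℝ, ENNReal.ofReal
                ((1 + (l : ℝ) ^ 2 + (η + (l : ℝ) * t) ^ 2) ^ b * ‖G (l, η)‖ ^ 2)) ^ ((1 : ℝ) / 2)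
            + (∑' l : ℤ, ∫⁻ η : ℝ, ENNReal.ofReal ‖G (l, η)‖) *
              (∑' l : ℤ, ∫⁻ η : ℝ, ENNReal.ofReal
                ((1 + (l : ℝ) ^ 2 + (η + (l : ℝ) * t) ^ 2) ^ b * ‖F (l, η)‖ ^ 2)) ^ ((1 : ℝ) / 2)) := by
  classical
  set f : ℤ × ℝ → ℝ≥0∞ := fun p => (‖F p‖₊ : ℝ≥0∞) with hfdef
  set g : ℤ × ℝ → ℝ≥0∞ := fun p => (‖G p‖₊ : ℝ≥0∞) with hgdef
  set w : ℤ × ℝ → ℝ≥0∞ :=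
    fun p => ENNReal.ofReal ((1 + (p.1:ℝ)^2 + (p.2 + (p.1:ℝ)*t)^2) ^ (b/2)) with hwdef
  have hfm : Measurable f := hFm.enorm
  have hgm : Measurable g := hGm.enorm
  have hwm : Measurable w := by rw [hwdef]; fun_prop
  set c : ℝ≥0∞ := ENNReal.ofReal ((2:ℝ)^b) with hcdef
  have hc_ne : c ≠ ⊤ := ENNReal.ofReal_ne_top
  set ψ₁ : ℤ × ℝ → ℝ≥0∞ := fun x => ∫⁻ y, f y * ((fun z => w z * g z) (x - y)) ∂muZR with hψ₁def
  set ψ₂ : ℤ × ℝ → ℝ≥0∞ :=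
    fun x => ∫⁻ y, ((fun z => w z * f z) y) * g (x - y) ∂muZR with hψ₂def
  have hψ₁ : Measurable ψ₁ := conv_measurable hfm (hwm.mul hgm)
  have hψ₂ : Measurable ψ₂ := conv_measurable (hwm.mul hfm) hgm
  -- pointwise key bound
  have key : ∀ (k : ℤ) (ξ : ℝ),
      ENNReal.ofReal ((1 + (k:ℝ)^2 + (ξ + (k:ℝ)*t)^2)^b * ‖Hc (k,ξ)‖^2)
        ≤ (c * (ψ₁ (k,ξ) + ψ₂ (k,ξ))) ^ (2:ℕ) := by
    intro k ξ
    rw [ofReal_weight_sq b t k ξ (Hc (k,ξ))]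
    apply pow_le_pow_left' _ 2
    have hHb : (‖Hc (k,ξ)‖₊ : ℝ≥0∞) ≤ ∑' l : ℤ, ∫⁻ η, f (l,η) * g (k-l, ξ-η) := by
      rw [hH k ξ]
      refine le_trans (enorm_tsum_le _) (ENNReal.tsum_le_tsum fun l => ?_)
      refine le_trans (enorm_integral_le_lintegral_enorm _) (le_of_eq ?_)
      congr 1; ext η
      rw [enorm_mul, enorm_eq_nnnorm, enorm_eq_nnnorm]
    have hwfin : w (k,ξ) ≠ ⊤ := ENNReal.ofReal_ne_top
    calc w (k,ξ) * (‖Hc (k,ξ)‖₊ : ℝ≥0∞)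
        ≤ w (k,ξ) * ∑' l : ℤ, ∫⁻ η, f (l,η) * g (k-l, ξ-η) := mul_le_mul_right hHb _
      _ = ∑' l : ℤ, ∫⁻ η, w (k,ξ) * (f (l,η) * g (k-l, ξ-η)) := by
          rw [← ENNReal.tsum_mul_left]
          congr 1; ext l
          rw [← lintegral_const_mul' _ _ hwfin]
      _ ≤ ∑' l : ℤ, ∫⁻ η, (c * (w (l,η) + w (k-l,ξ-η))) * (f (l,η) * g (k-l, ξ-η)) := by
          refine ENNReal.tsum_le_tsum fun l => lintegral_mono fun η => ?_
          refine mul_le_mul_left ?_ _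
          calc w (k,ξ)
              ≤ ENNReal.ofReal ((2:ℝ)^b * ((1 + (l:ℝ)^2 + (η + (l:ℝ)*t)^2) ^ (b/2)
                + (1 + ((k - l : ℤ):ℝ)^2 + ((ξ - η) + ((k - l : ℤ):ℝ)*t)^2) ^ (b/2))) :=
                ENNReal.ofReal_le_ofReal (wsub hb t k l ξ η)
            _ = c * (w (l,η) + w (k-l,ξ-η)) := by
                rw [ENNReal.ofReal_mul (by positivity),
                  ENNReal.ofReal_add (by positivity) (by positivity)]
      _ = c * (ψ₂ (k,ξ) + ψ₁ (k,ξ)) := by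
          have expand : ∀ (l : ℤ) (η : ℝ),
              (c * (w (l,η) + w (k-l,ξ-η))) * (f (l,η) * g (k-l, ξ-η))
                = c * ((w (l,η) * f (l,η)) * g (k-l, ξ-η))
                  + c * (f (l,η) * (w (k-l,ξ-η) * g (k-l, ξ-η))) := by
            intro l η; ring
          simp_rw [expand]
          have hm1 : ∀ l : ℤ, Measurable fun η : ℝ => (w (l,η) * f (l,η)) * g (k-l, ξ-η) := by
            intro l
            have e1 : Measurable fun η : ℝ => (l, η) := measurable_prodMk_left
            have e2 : Measurable fun η : ℝ => ((k-l : ℤ), ξ - η) :=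
              measurable_const.prodMk (measurable_const.sub measurable_id)
            exact ((hwm.comp e1).mul (hfm.comp e1)).mul (hgm.comp e2)
          have hm2 : ∀ l : ℤ, Measurable fun η : ℝ => f (l,η) * (w (k-l,ξ-η) * g (k-l, ξ-η)) := by
            intro l
            have e1 : Measurable fun η : ℝ => (l, η) := measurable_prodMk_left
            have e2 : Measurable fun η : ℝ => ((k-l : ℤ), ξ - η) :=
              measurable_const.prodMk (measurable_const.sub measurable_id)
            exact (hfm.comp e1).mul ((hwm.comp e2).mul (hgm.comp e2))
          have eψ₂ : ψ₂ (k,ξ) = ∑' l : ℤ, ∫⁻ η, (w (l,η) * f (l,η)) * g (k-l, ξ-η) := by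
            have hM : Measurable fun y : ℤ × ℝ => (w y * f y) * g ((k,ξ) - y) :=
              (hwm.mul hfm).mul (hgm.comp (measurable_const.sub measurable_id))
            have h := sumInt_eq _ hM
            simpa [Prod.mk_sub_mk] using h
          have eψ₁ : ψ₁ (k,ξ) = ∑' l : ℤ, ∫⁻ η, f (l,η) * (w (k-l,ξ-η) * g (k-l, ξ-η)) := by
            have hM : Measurable fun y : ℤ × ℝ => f y * (w ((k,ξ) - y) * g ((k,ξ) - y)) :=
              hfm.mul ((hwm.mul hgm).comp (measurable_const.sub measurable_id))
            have h := sumInt_eq _ hM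
            simpa [Prod.mk_sub_mk] using h
          rw [eψ₂, eψ₁]
          calc ∑' l : ℤ, ∫⁻ η, (c * ((w (l,η) * f (l,η)) * g (k-l, ξ-η))
                  + c * (f (l,η) * (w (k-l,ξ-η) * g (k-l, ξ-η))))
              = ∑' l : ℤ, (c * (∫⁻ η, (w (l,η) * f (l,η)) * g (k-l, ξ-η))
                  + c * ∫⁻ η, f (l,η) * (w (k-l,ξ-η) * g (k-l, ξ-η))) := by
                congr 1; ext l
                rw [lintegral_add_left ((hm1 l).const_mul c),
                  lintegral_const_mul' _ _ hc_ne, lintegral_const_mul' _ _ hc_ne]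
            _ = c * ((∑' l : ℤ, ∫⁻ η, (w (l,η) * f (l,η)) * g (k-l, ξ-η))
                  + ∑' l : ℤ, ∫⁻ η, f (l,η) * (w (k-l,ξ-η) * g (k-l, ξ-η))) := by
                rw [ENNReal.tsum_add, ENNReal.tsum_mul_left, ENNReal.tsum_mul_left, mul_add]
      _ = c * (ψ₁ (k,ξ) + ψ₂ (k,ξ)) := by rw [add_comm (ψ₂ (k,ξ))]
  -- global quantities
  have eF1 : (∑' l : ℤ, ∫⁻ η : ℝ, ENNReal.ofReal ‖F (l, η)‖) = ∫⁻ p, f p ∂muZR := by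
    rw [sumInt_eq f hfm]
    congr 1; ext l; congr 1; ext η
    rw [hfdef, ofReal_norm_eq_enorm, enorm_eq_nnnorm]
  have eG1 : (∑' l : ℤ, ∫⁻ η : ℝ, ENNReal.ofReal ‖G (l, η)‖) = ∫⁻ p, g p ∂muZR := by
    rw [sumInt_eq g hgm]
    congr 1; ext l; congr 1; ext η
    rw [hgdef, ofReal_norm_eq_enorm, enorm_eq_nnnorm]
  have eF2 : (∑' l : ℤ, ∫⁻ η : ℝ,
      ENNReal.ofReal ((1 + (l : ℝ) ^ 2 + (η + (l : ℝ) * t) ^ 2) ^ b * ‖F (l, η)‖ ^ 2))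
        = ∫⁻ p, (w p * f p) ^ (2:ℕ) ∂muZR := by
    rw [sumInt_eq (fun p => (w p * f p) ^ (2:ℕ)) ((hwm.mul hfm).pow_const 2)]
    congr 1; ext l; congr 1; ext η
    exact ofReal_weight_sq b t l η (F (l, η))
  have eG2 : (∑' l : ℤ, ∫⁻ η : ℝ,
      ENNReal.ofReal ((1 + (l : ℝ) ^ 2 + (η + (l : ℝ) * t) ^ 2) ^ b * ‖G (l, η)‖ ^ 2))
        = ∫⁻ p, (w p * g p) ^ (2:ℕ) ∂muZR := by
    rw [sumInt_eq (fun p => (w p * g p) ^ (2:ℕ)) ((hwm.mul hgm).pow_const 2)]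
    congr 1; ext l; congr 1; ext η
    exact ofReal_weight_sq b t l η (G (l, η))
  have conv2 : ∀ x : ℝ≥0∞, x ^ (2:ℝ) = x ^ (2:ℕ) := fun x => by
    rw [← ENNReal.rpow_natCast x 2]; norm_num
  calc (∑' k : ℤ, ∫⁻ ξ : ℝ,
        ENNReal.ofReal ((1 + (k : ℝ) ^ 2 + (ξ + (k : ℝ) * t) ^ 2) ^ b * ‖Hc (k, ξ)‖ ^ 2))
          ^ ((1 : ℝ) / 2)
      ≤ (∑' k : ℤ, ∫⁻ ξ : ℝ, (c * (ψ₁ (k,ξ) + ψ₂ (k,ξ))) ^ (2:ℕ)) ^ ((1 : ℝ) / 2) := by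
        apply ENNReal.rpow_le_rpow _ (by norm_num)
        exact ENNReal.tsum_le_tsum fun k => lintegral_mono fun ξ => key k ξ
    _ = (∫⁻ x, (c * (ψ₁ x + ψ₂ x)) ^ (2:ℕ) ∂muZR) ^ ((1 : ℝ) / 2) := by
        rw [sumInt_eq (fun x => (c * (ψ₁ x + ψ₂ x)) ^ (2:ℕ)) (((measurable_const.mul (hψ₁.add hψ₂))).pow_const 2)]
    _ = c * (∫⁻ x, (ψ₁ x + ψ₂ x) ^ (2:ℕ) ∂muZR) ^ ((1 : ℝ) / 2) := by
        simp_rw [mul_pow]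
        rw [lintegral_const_mul' _ _ (ENNReal.pow_ne_top hc_ne),
          ENNReal.mul_rpow_of_nonneg _ _ (by norm_num), sq_rpow_half]
    _ ≤ c * ((∫⁻ x, ψ₁ x ^ (2:ℕ) ∂muZR) ^ ((1 : ℝ) / 2)
          + (∫⁻ x, ψ₂ x ^ (2:ℕ) ∂muZR) ^ ((1 : ℝ) / 2)) := by
        apply mul_le_mul_right
        have hadd := ENNReal.lintegral_Lp_add_le (μ := muZR)
          hψ₁.aemeasurable hψ₂.aemeasurable one_le_two
        simp only [conv2] at hadd
        convert hadd using 2 <;> norm_num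
    _ ≤ c * ((∫⁻ p, f p ∂muZR) * (∫⁻ p, (w p * g p) ^ (2:ℕ) ∂muZR) ^ ((1 : ℝ) / 2)
          + (∫⁻ p, g p ∂muZR) * (∫⁻ p, (w p * f p) ^ (2:ℕ) ∂muZR) ^ ((1 : ℝ) / 2)) := by
        apply mul_le_mul_right
        apply add_le_add
        · exact young hfm (hwm.mul hgm)
        · have eswap : ∀ x : ℤ × ℝ, ψ₂ x = ∫⁻ y, g y * ((fun z => w z * f z) (x - y)) ∂muZR :=
            fun x => conv_comm (hwm.mul hfm) hgm x
          have : (∫⁻ x, ψ₂ x ^ (2:ℕ) ∂muZR)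
              = ∫⁻ x, (∫⁻ y, g y * ((fun z => w z * f z) (x - y)) ∂muZR) ^ (2:ℕ) ∂muZR := by
            congr 1; ext x; rw [eswap x]
          rw [this]
          exact young hgm (hwm.mul hfm)
    _ = ENNReal.ofReal ((2 : ℝ) ^ b) *
          ((∑' l : ℤ, ∫⁻ η : ℝ, ENNReal.ofReal ‖F (l, η)‖) *
              (∑' l : ℤ, ∫⁻ η : ℝ, ENNReal.ofReal
                ((1 + (l : ℝ) ^ 2 + (η + (l : ℝ) * t) ^ 2) ^ b * ‖G (l, η)‖ ^ 2)) ^ ((1 : ℝ) / 2)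
            + (∑' l : ℤ, ∫⁻ η : ℝ, ENNReal.ofReal ‖G (l, η)‖) *
              (∑' l : ℤ, ∫⁻ η : ℝ, ENNReal.ofReal
                ((1 + (l : ℝ) ^ 2 + (η + (l : ℝ) * t) ^ 2) ^ b * ‖F (l, η)‖ ^ 2)) ^ ((1 : ℝ) / 2)) := by
        rw [eF1, eG1, eF2, eG2, hcdef]
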